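/- arXiv:2205.11936 — 2 statements merged into one kernel-verified Lean document; each statement's English description precedes it below -/
import Mathlib

section
/- Regularity of the inverse of a concave solution with vertical tangent (step in the proof of Theorem 3.2). Let u : [a,c] → ℝ be continuous, continuously differentiable on (a,c] with u'(x) > 0 for all x ∈ (a,c], u' locally absolutely continuous on (a,c], u concave on [a,c], and lim_{x→a⁺} u'(x) = +∞. Set α = u(a), ω = u(c), and let w : [α,ω] → [a,c] be the inverse function of u. Then w is continuously differentiable on [α,ω] with w'(α) = 0 and w'(t) = 1/u'(w(t)) for t ∈ (α,ω]; w' is increasing with 0 < w'(t) ≤ 1/u'(c) for t ∈ (α,ω]; w' is locally absolutely continuous on (α,ω]; and w''(t) = −u''(w(t)) · (w'(t))³ for almost every t ∈ (α,ω). -/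
open Set Filter MeasureTheory Topology

lemma parts_aux {p x : ℝ} {f g : ℝ → ℝ}
    (hf : IntegrableOn f (Ioc p x)) (hg : IntegrableOn g (Ioc p x)) :
    (∫ s in Ioc p x, f s) * (∫ t in Ioc p x, g t) =
      (∫ s in Ioc p x, f s * ∫ t in Ioc p s, g t) +
      ∫ t in Ioc p x, (∫ s in Ioc p t, f s) * g t := by
  set μ := volume.restrict (Ioc p x) with hμ
  have hprod : Integrable (fun z : ℝ × ℝ => f z.1 * g z.2) (μ.prod μ) := hf.mul_prod hg
  have hA : MeasurableSet {z : ℝ × ℝ | z.2 ≤ z.1} :=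
    measurableSet_le measurable_snd measurable_fst
  have hk : Integrable ({z : ℝ × ℝ | z.2 ≤ z.1}.indicator fun z => f z.1 * g z.2) (μ.prod μ) :=
    hprod.indicator hA
  have hk' : Integrable ({z : ℝ × ℝ | z.2 ≤ z.1}ᶜ.indicator fun z => f z.1 * g z.2) (μ.prod μ) :=
    hprod.indicator hA.compl
  have h1 : (∫ s in Ioc p x, f s) * (∫ t in Ioc p x, g t)
      = ∫ z, f z.1 * g z.2 ∂(μ.prod μ) := (integral_prod_mul f g).symm
  have hsplit : ∫ z, f z.1 * g z.2 ∂(μ.prod μ)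
      = (∫ z, ({z : ℝ × ℝ | z.2 ≤ z.1}.indicator fun z => f z.1 * g z.2) z ∂(μ.prod μ))
      + ∫ z, ({z : ℝ × ℝ | z.2 ≤ z.1}ᶜ.indicator fun z => f z.1 * g z.2) z ∂(μ.prod μ) := by
    rw [← integral_add hk hk']
    congr 1
    ext z
    simp [Set.indicator_apply]
    by_cases h : z.2 ≤ z.1
    · simp [h]
    · simp [h, not_le.mp h]
  have h2 : (∫ z, ({z : ℝ × ℝ | z.2 ≤ z.1}.indicator fun z => f z.1 * g z.2) z ∂(μ.prod μ))
      = ∫ s in Ioc p x, f s * ∫ t in Ioc p s, g t := by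
    rw [integral_prod _ hk]
    refine setIntegral_congr_fun measurableSet_Ioc fun s hs => ?_
    have : (fun t => ({z : ℝ × ℝ | z.2 ≤ z.1}.indicator fun z => f z.1 * g z.2) (s, t))
        = (Iic s).indicator (fun t => f s * g t) := by
      ext t; simp [Set.indicator_apply]
    rw [this, integral_indicator measurableSet_Iic, Measure.restrict_restrict measurableSet_Iic]
    have hset : Iic s ∩ Ioc p x = Ioc p s := by
      ext y; simp only [mem_inter_iff, mem_Iic, mem_Ioc]
      exact ⟨fun h => ⟨h.2.1, h.1⟩, fun h => ⟨h.2, h.1, h.2.trans hs.2⟩⟩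
    rw [hset, integral_const_mul]
  have h3 : (∫ z, ({z : ℝ × ℝ | z.2 ≤ z.1}ᶜ.indicator fun z => f z.1 * g z.2) z ∂(μ.prod μ))
      = ∫ t in Ioc p x, (∫ s in Ioc p t, f s) * g t := by
    rw [integral_prod_symm _ hk']
    refine setIntegral_congr_fun measurableSet_Ioc fun t ht => ?_
    have : (fun s => ({z : ℝ × ℝ | z.2 ≤ z.1}ᶜ.indicator fun z => f z.1 * g z.2) (s, t))
        = (Iio t).indicator (fun s => f s * g t) := by
      ext s; simp [Set.indicator_apply, not_le]
    rw [this, integral_indicator measurableSet_Iio, Measure.restrict_restrict measurableSet_Iio]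
    have hset : Iio t ∩ Ioc p x = Ioo p t := by
      ext y; simp only [mem_inter_iff, mem_Iio, mem_Ioo, mem_Ioc]
      exact ⟨fun h => ⟨h.2.1, h.1⟩, fun h => ⟨h.2, h.1, h.2.le.trans ht.2⟩⟩
    rw [hset]
    rw [setIntegral_congr_set Ioo_ae_eq_Ioc, integral_mul_const]
  rw [h1, hsplit, h2, h3]

lemma gron_zero {p q : ℝ} (hpq : p ≤ q) {k P : ℝ → ℝ}
    (hk : IntegrableOn k (Icc p q)) (hP : ContinuousOn P (Icc p q))
    (hrep : ∀ x ∈ Icc p q, P x = ∫ y in Ioc p x, k y * P y) :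
    ∀ x ∈ Icc p q, P x = 0 := by
  have hkP : IntegrableOn (fun y => k y * P y) (Icc p q) :=
    hk.mul_continuousOn hP isCompact_Icc
  have hknorm : IntegrableOn (fun y => ‖k y‖) (Icc p q) := hk.norm
  have hKcont : ContinuousOn (fun x => ∫ y in Ioc p x, ‖k y‖) (Icc p q) :=
    intervalIntegral.continuousOn_primitive hknorm
  set S : Set ℝ := {x | x ∈ Icc p q ∧ ∀ y ∈ Icc p x, P y = 0} with hS
  have hpS : p ∈ S := by
    refine ⟨⟨le_rfl, hpq⟩, fun y hy => ?_⟩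
    have hyp : y = p := le_antisymm hy.2 hy.1
    rw [hyp, hrep p ⟨le_rfl, hpq⟩, Ioc_self, Measure.restrict_empty, integral_zero_measure]
  have hbdd : BddAbove S := ⟨q, fun x hx => hx.1.2⟩
  set T := sSup S with hT
  have hpT : p ≤ T := le_csSup hbdd hpS
  have hTq : T ≤ q := csSup_le ⟨p, hpS⟩ fun x hx => hx.1.2
  have hzero : ∀ y ∈ Ico p T, P y = 0 := by
    intro y hy
    obtain ⟨x, hxS, hyx⟩ := exists_lt_of_lt_csSup ⟨p, hpS⟩ hy.2
    exact hxS.2 y ⟨hy.1, hyx.le⟩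
  have hPT : P T = 0 := by
    rw [hrep T ⟨hpT, hTq⟩, ← setIntegral_congr_set Ioo_ae_eq_Ioc]
    rw [setIntegral_congr_fun measurableSet_Ioo (g := fun _ => (0:ℝ))
      (fun y hy => by rw [hzero y ⟨hy.1.le, hy.2⟩, mul_zero])]
    simp
  -- key: P vanishes on [p, T] and T = q
  have hzero' : ∀ y ∈ Icc p T, P y = 0 := by
    intro y hy
    rcases eq_or_lt_of_le hy.2 with h | h
    · rw [h]; exact hPT
    · exact hzero y ⟨hy.1, h⟩
  have hTeq : T = q := by
    by_contra hne
    have hTltq : T < q := lt_of_le_of_ne hTq hne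
    -- choose r > T with small integral of |k| on (T, r]
    have hcw : ContinuousWithinAt (fun x => ∫ y in Ioc p x, ‖k y‖) (Icc p q) T :=
      hKcont T ⟨hpT, hTq⟩
    rw [Metric.continuousWithinAt_iff] at hcw
    obtain ⟨δ, hδpos, hδ⟩ := hcw (1/2) (by norm_num)
    set r := min q (T + δ/2) with hr
    have hTr : T < r := lt_min hTltq (by linarith)
    have hrq : r ≤ q := min_le_left _ _
    have hrIcc : r ∈ Icc p q := ⟨hpT.trans hTr.le, hrq⟩
    have hdist : dist r T < δ := by
      rw [Real.dist_eq, abs_of_pos (by linarith)]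
      have : r ≤ T + δ/2 := min_le_right _ _
      linarith
    have hsmall : ∫ y in Ioc T r, ‖k y‖ ≤ 1/2 := by
      have hsplitset : Ioc p T ∪ Ioc T r = Ioc p r := Ioc_union_Ioc_eq_Ioc hpT hTr.le
      have hint1 : IntegrableOn (fun y => ‖k y‖) (Ioc p T) :=
        hknorm.mono_set (Ioc_subset_Icc_self.trans (Icc_subset_Icc le_rfl hTq))
      have hint2 : IntegrableOn (fun y => ‖k y‖) (Ioc T r) :=
        hknorm.mono_set (fun y hy => ⟨hpT.trans hy.1.le, hy.2.trans hrq⟩)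
      have hadd : (∫ y in Ioc p r, ‖k y‖) = (∫ y in Ioc p T, ‖k y‖) + ∫ y in Ioc T r, ‖k y‖ := by
        rw [← hsplitset, setIntegral_union (Ioc_disjoint_Ioc_of_le le_rfl) measurableSet_Ioc hint1 hint2]
      have := hδ hrIcc hdist
      rw [Real.dist_eq] at this
      have h2 : |(∫ y in Ioc p r, ‖k y‖) - ∫ y in Ioc p T, ‖k y‖| < 1/2 := this
      rw [hadd] at h2
      simp only [add_sub_cancel_left] at h2
      exact le_of_lt (lt_of_le_of_lt (le_abs_self _) h2)
    -- sup of |P| on [T, r]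
    obtain ⟨x₀, hx₀mem, hx₀max⟩ :=
      isCompact_Icc.exists_isMaxOn (nonempty_Icc.mpr hTr.le)
        ((hP.mono (Icc_subset_Icc hpT hrq)).abs)
    set M := |P x₀| with hM
    have hMnonneg : 0 ≤ M := abs_nonneg _
    have hbound : ∀ x ∈ Icc T r, |P x| ≤ M * (1/2) := by
      intro x hx
      have hxpq : x ∈ Icc p q := ⟨hpT.trans hx.1, hx.2.trans hrq⟩
      have hPsplit : P x = ∫ y in Ioc T x, k y * P y := by
        have h1 : P x = ∫ y in Ioc p x, k y * P y := hrep x hxpq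
        have h2 : P T = ∫ y in Ioc p T, k y * P y := hrep T ⟨hpT, hTq⟩
        have hsplitset : Ioc p T ∪ Ioc T x = Ioc p x := Ioc_union_Ioc_eq_Ioc hpT hx.1
        have hint1 : IntegrableOn (fun y => k y * P y) (Ioc p T) :=
          hkP.mono_set (Ioc_subset_Icc_self.trans (Icc_subset_Icc le_rfl hTq))
        have hint2 : IntegrableOn (fun y => k y * P y) (Ioc T x) :=
          hkP.mono_set fun y hy => ⟨(hpT.trans hy.1.le), hy.2.trans hxpq.2⟩
        have hadd : (∫ y in Ioc p x, k y * P y)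
            = (∫ y in Ioc p T, k y * P y) + ∫ y in Ioc T x, k y * P y := by
          rw [← hsplitset, setIntegral_union (Ioc_disjoint_Ioc_of_le le_rfl) measurableSet_Ioc hint1 hint2]
        rw [h1, hadd, ← h2, hPT, zero_add]
      have hint2 : IntegrableOn (fun y => k y * P y) (Ioc T x) :=
        hkP.mono_set fun y hy => ⟨(hpT.trans hy.1.le), hy.2.trans hxpq.2⟩
      have hintk : IntegrableOn (fun y => ‖k y‖) (Ioc T x) :=
        hknorm.mono_set fun y hy => ⟨(hpT.trans hy.1.le), hy.2.trans hxpq.2⟩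
      have hintkr : IntegrableOn (fun y => ‖k y‖) (Ioc T r) :=
        hknorm.mono_set fun y hy => ⟨(hpT.trans hy.1.le), hy.2.trans hrq⟩
      calc |P x| = ‖∫ y in Ioc T x, k y * P y‖ := by rw [hPsplit, Real.norm_eq_abs]
        _ ≤ ∫ y in Ioc T x, ‖k y * P y‖ := norm_integral_le_integral_norm _
        _ ≤ ∫ y in Ioc T x, ‖k y‖ * M := by
            refine setIntegral_mono_on hint2.norm (hintk.mul_const M) measurableSet_Ioc
              fun y hy => ?_
            rw [Real.norm_eq_abs, abs_mul, Real.norm_eq_abs]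
            exact mul_le_mul_of_nonneg_left
              (hx₀max ⟨hy.1.le, hy.2.trans hx.2⟩) (abs_nonneg _)
        _ = (∫ y in Ioc T x, ‖k y‖) * M := integral_mul_const _ _
        _ ≤ (1/2) * M := by
            refine mul_le_mul_of_nonneg_right ?_ hMnonneg
            have hintkr : IntegrableOn (fun y => ‖k y‖) (Ioc T r) :=
              hknorm.mono_set fun y hy => ⟨(hpT.trans hy.1.le), hy.2.trans hrq⟩
            refine le_trans (setIntegral_mono_set hintkr
              (Eventually.of_forall fun y => norm_nonneg _)
              (HasSubset.Subset.eventuallyLE (Ioc_subset_Ioc le_rfl hx.2))) hsmall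
        _ = M * (1/2) := mul_comm _ _
    have hM0 : M = 0 := by
      have := hbound x₀ hx₀mem
      rw [← hM] at this
      nlinarith
    have hrS : r ∈ S := by
      refine ⟨hrIcc, fun y hy => ?_⟩
      rcases le_or_gt y T with h | h
      · exact hzero' y ⟨hy.1, h⟩
      · have : |P y| ≤ M * (1/2) := hbound y ⟨h.le, hy.2⟩
        rw [hM0] at this
        exact abs_nonpos_iff.mp (by simpa using this)
    exact absurd (le_csSup hbdd hrS) (not_le.mpr hTr)
  intro x hx
  exact hzero' x ⟨hx.1, hx.2.trans_eq hTeq.symm⟩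

lemma core_recip {p q : ℝ} (hpq : p ≤ q) {v g : ℝ → ℝ}
    (hv_cont : ContinuousOn v (Icc p q)) (hv_pos : ∀ x ∈ Icc p q, 0 < v x)
    (hg : IntegrableOn g (Icc p q))
    (hrep : ∀ x ∈ Icc p q, v x = v p + ∫ t in Ioc p x, g t) :
    ∀ x ∈ Icc p q, (∫ t in Ioc p x, -g t / (v t) ^ 2) = 1 / v x - 1 / v p := by
  have hvp : 0 < v p := hv_pos p ⟨le_rfl, hpq⟩
  set g2 : ℝ → ℝ := fun t => -g t / v t ^ 2 with hg2def
  have hvne : ∀ y ∈ Icc p q, v y ≠ 0 := fun y hy => (hv_pos y hy).ne'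
  have hq2cont : ContinuousOn (fun t => -(v t ^ 2)⁻¹) (Icc p q) := by
    exact (((hv_cont.pow 2).inv₀ fun y hy => pow_ne_zero _ (hvne y hy))).neg
  have hg2eq : ∀ y ∈ Icc p q, g2 y = g y * -(v y ^ 2)⁻¹ := by
    intro y hy; simp only [hg2def]; ring
  have hg2int : IntegrableOn g2 (Icc p q) := by
    refine (hg.mul_continuousOn hq2cont isCompact_Icc).congr_fun ?_ measurableSet_Icc
    exact fun y hy => (hg2eq y hy).symm
  set F : ℝ → ℝ := fun s => ∫ t in Ioc p s, g t with hFdef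
  set G : ℝ → ℝ := fun s => ∫ t in Ioc p s, g2 t with hGdef
  have hFcont : ContinuousOn F (Icc p q) := intervalIntegral.continuousOn_primitive hg
  have hGcont : ContinuousOn G (Icc p q) := intervalIntegral.continuousOn_primitive hg2int
  set P : ℝ → ℝ := fun s => v s * ((v p)⁻¹ + G s) - 1 with hPdef
  have hPcont : ContinuousOn P (Icc p q) :=
    ((hv_cont.mul (continuousOn_const.add hGcont)).sub continuousOn_const)
  have hkint : IntegrableOn (fun y => g y * (v y)⁻¹) (Icc p q) :=
    hg.mul_continuousOn (hv_cont.inv₀ hvne) isCompact_Icc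
  have hPrep : ∀ x ∈ Icc p q, P x = ∫ y in Ioc p x, (g y * (v y)⁻¹) * P y := by
    intro x hx
    have hsub : Ioc p x ⊆ Icc p q := fun y hy => ⟨hy.1.le, hy.2.trans hx.2⟩
    have hgI : IntegrableOn g (Ioc p x) := hg.mono_set hsub
    have hg2I : IntegrableOn g2 (Ioc p x) := hg2int.mono_set hsub
    have hparts := parts_aux hgI hg2I
    -- P x = v p * G x + F x * (v p)⁻¹ + F x * G x
    have hvx : v x = v p + F x := hrep x hx
    have hPx : P x = v p * G x + F x * (v p)⁻¹ + F x * G x := by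
      simp only [hPdef]
      rw [hvx]
      field_simp [hvp.ne']
      ring
    have hint1 : IntegrableOn (fun y => v p * g2 y) (Ioc p x) := hg2I.const_mul _
    have hint2 : IntegrableOn (fun y => g y * (v p)⁻¹) (Ioc p x) := hgI.mul_const _
    have hint3 : IntegrableOn (fun y => g y * G y) (Ioc p x) :=
      (hg.mul_continuousOn hGcont isCompact_Icc).mono_set hsub
    have hint4 : IntegrableOn (fun y => F y * g2 y) (Ioc p x) :=
      (IntegrableOn.continuousOn_mul hFcont hg2int isCompact_Icc).mono_set hsub
    have hint12 : IntegrableOn (fun y => v p * g2 y + g y * (v p)⁻¹) (Ioc p x) :=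
      hint1.add hint2
    have hint34 : IntegrableOn (fun y => g y * G y + F y * g2 y) (Ioc p x) :=
      hint3.add hint4
    have e1 : (∫ y in Ioc p x, (v p * g2 y + g y * (v p)⁻¹ + (g y * G y + F y * g2 y)))
        = (∫ y in Ioc p x, v p * g2 y) + (∫ y in Ioc p x, g y * (v p)⁻¹)
          + ((∫ y in Ioc p x, g y * G y) + (∫ y in Ioc p x, F y * g2 y)) := by
      rw [integral_add hint12 hint34, integral_add hint1 hint2, integral_add hint3 hint4]
    have e2 : (∫ y in Ioc p x, v p * g2 y) = v p * G x := integral_const_mul _ _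
    have e3 : (∫ y in Ioc p x, g y * (v p)⁻¹) = F x * (v p)⁻¹ := integral_mul_const _ _
    have hsum : P x = ∫ y in Ioc p x,
        (v p * g2 y + g y * (v p)⁻¹ + (g y * G y + F y * g2 y)) := by
      rw [hPx, e1, e2, e3, hparts]
    rw [hsum]
    refine setIntegral_congr_fun measurableSet_Ioc fun y hy => ?_
    have hyIcc : y ∈ Icc p q := hsub hy
    have hvy : v y = v p + F y := hrep y hyIcc
    have hvyne : v y ≠ 0 := hvne y hyIcc
    have hFy : F y = v y - v p := by linarith [hvy]
    simp only [hg2def, hPdef]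
    rw [hFy]
    field_simp [hvyne, hvp.ne']
    ring
  have hP0 := gron_zero hpq hkint hPcont hPrep
  intro x hx
  have h0 := hP0 x hx
  have hvxne : v x ≠ 0 := hvne x hx
  simp only [hPdef] at h0
  have h1 : v x * ((v p)⁻¹ + G x) = 1 := by linarith
  have h2 : (v p)⁻¹ + G x = (v x)⁻¹ :=
    mul_left_cancel₀ hvxne (h1.trans (mul_inv_cancel₀ hvxne).symm)
  have hGx : G x = (v x)⁻¹ - (v p)⁻¹ := by linarith
  rw [one_div, one_div]
  exact hGx

/-- **Regularity of the inverse of a concave solution with vertical tangent (step in the proof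
of Theorem 3.2).** If `u : [a,c] → ℝ` is continuous, C¹ on `(a,c]` with `u' > 0` there, `u'`
locally absolutely continuous on `(a,c]` with a.e. derivative `u''`, `u` concave, and
`u'(a⁺) = +∞`, then the inverse `w : [α,ω] → [a,c]` (with `α = u(a)`, `ω = u(c)`) is C¹ on
`[α,ω]` with `w'(α) = 0` and `w' = 1/(u'∘w)` on `(α,ω]`; `w'` is increasing with
`0 < w' ≤ 1/u'(c)` on `(α,ω]`; `w'` is locally absolutely continuous on `(α,ω]`; and
`w'' = -u''(w)·(w')³` a.e. -/
theorem inverse_of_concave_solution_regularity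
    (a c : ℝ) (hac : a < c) (u u' u'' : ℝ → ℝ)
    (hu_cont : ContinuousOn u (Icc a c))
    -- u continuously differentiable on (a,c] with u' > 0
    (hu_deriv : ∀ x ∈ Ioo a c, HasDerivAt u (u' x) x)
    (hu_derivc : HasDerivWithinAt u (u' c) (Iic c) c)
    (hu'_cont : ContinuousOn u' (Ioc a c))
    (hu'_pos : ∀ x ∈ Ioc a c, 0 < u' x)
    -- u' locally absolutely continuous on (a,c] with a.e. derivative u''
    (hu'_locAC : ∀ a' ∈ Ioc a c, IntegrableOn u'' (Icc a' c) ∧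
      ∀ x ∈ Icc a' c, u' x = u' a' + ∫ t in a'..x, u'' t)
    -- u concave on [a,c]
    (hconc : ConcaveOn ℝ (Icc a c) u)
    -- vertical tangent at a
    (hblow : Tendsto u' (𝓝[>] a) atTop)
    -- w is the inverse function of u on [a,c]
    (w : ℝ → ℝ)
    (hw_inv₁ : ∀ x ∈ Icc a c, w (u x) = x)
    (hw_inv₂ : ∀ t ∈ Icc (u a) (u c), u (w t) = t) :
    ∃ w' : ℝ → ℝ,
      -- w is continuously differentiable on [α,ω] = [u a, u c]
      ContinuousOn w' (Icc (u a) (u c)) ∧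
      (∀ t ∈ Icc (u a) (u c), HasDerivWithinAt w (w' t) (Icc (u a) (u c)) t) ∧
      (∀ t ∈ Ioo (u a) (u c), HasDerivAt w (w' t) t) ∧
      w' (u a) = 0 ∧
      (∀ t ∈ Ioc (u a) (u c), w' t = 1 / u' (w t)) ∧
      -- w' is increasing with 0 < w' ≤ 1/u'(c) on (α,ω]
      MonotoneOn w' (Icc (u a) (u c)) ∧
      (∀ t ∈ Ioc (u a) (u c), 0 < w' t ∧ w' t ≤ 1 / u' c) ∧
      -- w' is locally absolutely continuous on (α,ω], with a.e. derivative -u''(w)·(w')³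
      (∀ α' ∈ Ioc (u a) (u c),
        IntegrableOn (fun t => -u'' (w t) * (w' t) ^ 3) (Icc α' (u c)) ∧
        ∀ t ∈ Icc α' (u c),
          w' t = w' α' + ∫ s in α'..t, -u'' (w s) * (w' s) ^ 3) := by

  have haIcc : a ∈ Icc a c := ⟨le_rfl, hac.le⟩
  have hcIcc : c ∈ Icc a c := ⟨hac.le, le_rfl⟩
  -- u is strictly monotone
  have humono : StrictMonoOn u (Icc a c) := by
    apply strictMonoOn_of_deriv_pos (convex_Icc a c) hu_cont
    intro x hx
    rw [interior_Icc] at hx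
    rw [(hu_deriv x hx).deriv]
    exact hu'_pos x ⟨hx.1, hx.2.le⟩
  have hαω : u a < u c := humono haIcc hcIcc hac
  -- derivative of u within Icc at points of Ioc
  have hu'Icc : ∀ x ∈ Ioc a c, HasDerivWithinAt u (u' x) (Icc a c) x := by
    intro x hx
    rcases eq_or_lt_of_le hx.2 with h | h
    · rw [h]; exact hu_derivc.mono Icc_subset_Iic_self
    · exact (hu_deriv x ⟨hx.1, h⟩).hasDerivWithinAt
  -- w maps [α,ω] into [a,c]
  have hwmem : ∀ t ∈ Icc (u a) (u c), w t ∈ Icc a c := by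
    intro t ht
    obtain ⟨x, hx, hux⟩ := intermediate_value_Icc hac.le hu_cont ht
    rw [← hux, hw_inv₁ x hx]; exact hx
  have hwa : w (u a) = a := hw_inv₁ a haIcc
  have hwc : w (u c) = c := hw_inv₁ c hcIcc
  have hwmono : StrictMonoOn w (Icc (u a) (u c)) := by
    intro s hs t ht hst
    by_contra h
    push_neg at h
    have := humono.monotoneOn (hwmem t ht) (hwmem s hs) h
    rw [hw_inv₂ t ht, hw_inv₂ s hs] at this
    exact absurd this (not_le.mpr hst)
  have hwmemIoc : ∀ t ∈ Ioc (u a) (u c), w t ∈ Ioc a c := by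
    intro t ht
    refine ⟨?_, (hwmem t ⟨ht.1.le, ht.2⟩).2⟩
    have := hwmono ⟨le_rfl, hαω.le⟩ ⟨ht.1.le, ht.2⟩ ht.1
    rwa [hwa] at this
  -- continuity of w
  have hwcont : ContinuousOn w (Icc (u a) (u c)) := by
    haveI : CompactSpace (Icc a c) := isCompact_iff_compactSpace.mp isCompact_Icc
    let e : Icc a c ≃ Icc (u a) (u c) :=
      { toFun := fun x => ⟨u x, humono.monotoneOn haIcc x.2 x.2.1,
          humono.monotoneOn x.2 hcIcc x.2.2⟩
        invFun := fun t => ⟨w t, hwmem t t.2⟩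
        left_inv := fun x => Subtype.ext (hw_inv₁ x x.2)
        right_inv := fun t => Subtype.ext (hw_inv₂ t t.2) }
    have hce : Continuous e := Continuous.subtype_mk hu_cont.restrict _
    let h := hce.homeoOfEquivCompactToT2
    rw [continuousOn_iff_continuous_restrict]
    exact continuous_subtype_val.comp h.symm.continuous
  -- u' is antitone on (a,c]
  have hu'anti : ∀ x ∈ Ioc a c, ∀ y ∈ Ioc a c, x ≤ y → u' y ≤ u' x := by
    intro x hx y hy hxy
    rcases eq_or_lt_of_le hxy with h | h
    · rw [h]
    · have hxI : x ∈ Icc a c := ⟨hx.1.le, hx.2⟩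
      have hyI : y ∈ Icc a c := ⟨hy.1.le, hy.2⟩
      calc u' y ≤ slope u x y := hconc.le_slope_of_hasDerivWithinAt hxI hyI h (hu'Icc y hy)
        _ ≤ u' x := hconc.slope_le_of_hasDerivWithinAt hxI hyI h (hu'Icc x hx)
  -- tangent-line inequality at a
  have htang : ∀ x ∈ Ioc a c, u' x ≤ slope u a x := fun x hx =>
    hconc.le_slope_of_hasDerivWithinAt haIcc ⟨hx.1.le, hx.2⟩ hx.1 (hu'Icc x hx)
  -- the candidate derivative
  set W : ℝ → ℝ := fun t => if u a < t then (u' (w t))⁻¹ else 0 with hWdef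
  have hWIoc : ∀ t ∈ Ioc (u a) (u c), W t = (u' (w t))⁻¹ := fun t ht => if_pos ht.1
  have hWa : W (u a) = 0 := if_neg (lt_irrefl _)
  -- w t tends to a from the right as t → (u a)⁺
  have hwtends : Tendsto w (𝓝[Icc (u a) (u c) \ {u a}] (u a)) (𝓝[>] a) := by
    refine tendsto_nhdsWithin_of_tendsto_nhds_of_eventually_within _ ?_ ?_
    · have := (hwcont (u a) ⟨le_rfl, hαω.le⟩).tendsto
      rw [hwa] at this
      exact this.mono_left (nhdsWithin_mono _ diff_subset)
    · filter_upwards [self_mem_nhdsWithin] with t ht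
      exact (hwmemIoc t ⟨lt_of_le_of_ne ht.1.1 (Ne.symm ht.2), ht.1.2⟩).1
  have hinvtends : Tendsto (fun t => (u' (w t))⁻¹)
      (𝓝[Icc (u a) (u c) \ {u a}] (u a)) (𝓝 0) :=
    (hblow.comp hwtends).inv_tendsto_atTop
  -- continuity of W
  have hWcont : ContinuousOn W (Icc (u a) (u c)) := by
    intro t ht
    rcases eq_or_lt_of_le ht.1 with heq | hlt
    · rw [← heq]
      rw [← continuousWithinAt_diff_self, ContinuousWithinAt, hWa]
      refine hinvtends.congr' ?_
      filter_upwards [self_mem_nhdsWithin] with s hs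
      exact (hWIoc s ⟨lt_of_le_of_ne hs.1.1 (Ne.symm hs.2), hs.1.2⟩).symm
    · have hmem : Ioi (u a) ∈ 𝓝 t := isOpen_Ioi.mem_nhds hlt
      have hmaps : MapsTo w (Icc (u a) (u c) ∩ Ioi (u a)) (Ioc a c) := fun s hs =>
        hwmemIoc s ⟨hs.2, hs.1.2⟩
      have hbase : ContinuousWithinAt (fun s => (u' (w s))⁻¹)
          (Icc (u a) (u c) ∩ Ioi (u a)) t := by
        refine ContinuousWithinAt.inv₀ ?_ (hu'_pos (w t) (hwmemIoc t ⟨hlt, ht.2⟩)).ne'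
        exact (hu'_cont (w t) (hwmemIoc t ⟨hlt, ht.2⟩)).comp
          ((hwcont t ht).mono inter_subset_left) hmaps
      have hcw : ContinuousWithinAt W (Icc (u a) (u c) ∩ Ioi (u a)) t := by
        refine hbase.congr (fun s hs => hWIoc s ⟨hs.2, hs.1.2⟩) (hWIoc t ⟨hlt, ht.2⟩)
      rw [ContinuousWithinAt, nhdsWithin_restrict' _ hmem]
      exact hcw
  -- derivative of w within Icc at points of Ioc
  have hWd : ∀ t ∈ Ioc (u a) (u c), HasDerivWithinAt w ((u' (w t))⁻¹) (Icc (u a) (u c)) t := by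
    intro t₀ ht₀
    have hx₀ : w t₀ ∈ Ioc a c := hwmemIoc t₀ ht₀
    have ht₀I : t₀ ∈ Icc (u a) (u c) := ⟨ht₀.1.le, ht₀.2⟩
    have hslope_u : Tendsto (slope u (w t₀)) (𝓝[Icc a c \ {w t₀}] (w t₀)) (𝓝 (u' (w t₀))) :=
      hasDerivWithinAt_iff_tendsto_slope.mp (hu'Icc (w t₀) hx₀)
    have hwmap : Tendsto w (𝓝[Icc (u a) (u c) \ {t₀}] t₀) (𝓝[Icc a c \ {w t₀}] (w t₀)) := by
      refine tendsto_nhdsWithin_of_tendsto_nhds_of_eventually_within _ ?_ ?_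
      · exact ((hwcont t₀ ht₀I).tendsto).mono_left (nhdsWithin_mono _ diff_subset)
      · filter_upwards [self_mem_nhdsWithin] with s hs
        refine ⟨hwmem s hs.1, fun hws => hs.2 ?_⟩
        have hws' : w s = w t₀ := hws
        have := congrArg u hws'
        rw [hw_inv₂ s hs.1, hw_inv₂ t₀ ht₀I] at this
        exact mem_singleton_iff.mpr this
    have hslope_eq : ∀ s ∈ Icc (u a) (u c) \ {t₀}, slope w t₀ s = (slope u (w t₀) (w s))⁻¹ := by
      intro s hs
      rw [slope_def_field, slope_def_field, inv_div, hw_inv₂ s hs.1, hw_inv₂ t₀ ht₀I]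
    rw [hasDerivWithinAt_iff_tendsto_slope]
    have hlim : Tendsto (fun s => (slope u (w t₀) (w s))⁻¹)
        (𝓝[Icc (u a) (u c) \ {t₀}] t₀) (𝓝 ((u' (w t₀))⁻¹)) :=
      (hslope_u.comp hwmap).inv₀ (hu'_pos (w t₀) hx₀).ne'
    refine hlim.congr' ?_
    filter_upwards [self_mem_nhdsWithin] with s hs
    exact (hslope_eq s hs).symm
  -- derivative of w within Icc at u a (vertical tangent inverts to 0)
  have hW0 : HasDerivWithinAt w 0 (Icc (u a) (u c)) (u a) := by
    rw [hasDerivWithinAt_iff_tendsto_slope]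
    refine squeeze_zero' ?_ ?_ hinvtends
    · filter_upwards [self_mem_nhdsWithin] with t ht
      have htIoc : t ∈ Ioc (u a) (u c) := ⟨lt_of_le_of_ne ht.1.1 (Ne.symm ht.2), ht.1.2⟩
      have hx : w t ∈ Ioc a c := hwmemIoc t htIoc
      rw [slope_def_field, hwa]
      have h1 : 0 < w t - a := sub_pos.mpr hx.1
      have h2 : 0 < t - u a := sub_pos.mpr htIoc.1
      positivity
    · filter_upwards [self_mem_nhdsWithin] with t ht
      have htIoc : t ∈ Ioc (u a) (u c) := ⟨lt_of_le_of_ne ht.1.1 (Ne.symm ht.2), ht.1.2⟩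
      have hx : w t ∈ Ioc a c := hwmemIoc t htIoc
      have h1 : 0 < w t - a := sub_pos.mpr hx.1
      have h3 : 0 < u' (w t) := hu'_pos (w t) hx
      have htg := htang (w t) hx
      rw [slope_def_field] at htg
      have h2 : 0 < t - u a := sub_pos.mpr htIoc.1
      have huwt : u (w t) = t := hw_inv₂ t ⟨htIoc.1.le, htIoc.2⟩
      rw [huwt] at htg
      -- htg : u' (w t) ≤ (t - u a) / (w t - a)
      rw [slope_def_field, hwa, div_le_iff₀ h2]
      rw [le_div_iff₀ h1] at htg
      have h4 : (u' (w t))⁻¹ * u' (w t) = 1 := inv_mul_cancel₀ h3.ne'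
      nlinarith [mul_le_mul_of_nonneg_left htg (inv_pos.mpr h3).le]
  -- assemble
  have hu'c_pos : 0 < u' c := hu'_pos c ⟨hac, le_rfl⟩
  refine ⟨W, hWcont, ?_, ?_, hWa, ?_, ?_, ?_, ?_⟩
  · intro t ht
    rcases eq_or_lt_of_le ht.1 with heq | hlt
    · rw [← heq, hWa]; exact hW0
    · rw [hWIoc t ⟨hlt, ht.2⟩]; exact hWd t ⟨hlt, ht.2⟩
  · intro t ht
    have h := (hWd t ⟨ht.1, ht.2.le⟩).hasDerivAt (Icc_mem_nhds ht.1 ht.2)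
    rw [hWIoc t ⟨ht.1, ht.2.le⟩]; exact h
  · intro t ht
    rw [hWIoc t ht, one_div]
  · -- monotonicity
    intro s hs t ht hst
    by_cases hs' : u a < s
    · have ht' : u a < t := hs'.trans_le hst
      rw [hWIoc s ⟨hs', hs.2⟩, hWIoc t ⟨ht', ht.2⟩]
      have h1 : w s ∈ Ioc a c := hwmemIoc s ⟨hs', hs.2⟩
      have h2 : w t ∈ Ioc a c := hwmemIoc t ⟨ht', ht.2⟩
      have hws : w s ≤ w t := hwmono.monotoneOn hs ht hst
      exact inv_anti₀ (hu'_pos (w t) h2) (hu'anti (w s) h1 (w t) h2 hws)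
    · have h0 : W s = 0 := if_neg hs'
      rw [h0]
      by_cases ht' : u a < t
      · rw [hWIoc t ⟨ht', ht.2⟩]
        exact (inv_pos.mpr (hu'_pos _ (hwmemIoc t ⟨ht', ht.2⟩))).le
      · have h0' : W t = 0 := if_neg ht'
        rw [h0']
  · -- positivity and upper bound
    intro t ht
    have h2 : w t ∈ Ioc a c := hwmemIoc t ht
    constructor
    · rw [hWIoc t ht]
      exact inv_pos.mpr (hu'_pos _ h2)
    · rw [hWIoc t ht, one_div]
      exact inv_anti₀ hu'c_pos (hu'anti (w t) h2 c ⟨hac, le_rfl⟩ h2.2)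
  · -- the absolutely continuous part
    intro α' hα'
    have hα'I : α' ∈ Icc (u a) (u c) := ⟨hα'.1.le, hα'.2⟩
    set p := w α' with hpdef
    have hpIoc : p ∈ Ioc a c := hwmemIoc α' hα'
    have hup : u p = α' := hw_inv₂ α' hα'I
    obtain ⟨hgint, hrep⟩ := hu'_locAC p hpIoc
    have hrepset : ∀ x ∈ Icc p c, u' x = u' p + ∫ t in Ioc p x, u'' t := by
      intro x hx
      rw [hrep x hx, intervalIntegral.integral_of_le hx.1]
    have hv_cont : ContinuousOn u' (Icc p c) :=
      hu'_cont.mono fun y hy => ⟨hpIoc.1.trans_le hy.1, hy.2⟩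
    have hv_pos : ∀ x ∈ Icc p c, 0 < u' x := fun x hx =>
      hu'_pos x ⟨hpIoc.1.trans_le hx.1, hx.2⟩
    have hcore := core_recip hpIoc.2 hv_cont hv_pos hgint hrepset
    have hpI : p ∈ Icc a c := ⟨hpIoc.1.le, hpIoc.2⟩
    -- image of intervals under u
    have himg : ∀ x ∈ Icc p c, u '' Ioo p x = Ioo α' (u x) := by
      intro x hx
      have hxI : x ∈ Icc a c := ⟨hpIoc.1.le.trans hx.1, hx.2⟩
      ext s
      constructor
      · rintro ⟨y, hy, rfl⟩
        have hyI : y ∈ Icc a c := ⟨hpI.1.trans hy.1.le, hy.2.le.trans hxI.2⟩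
        exact ⟨by rw [← hup]; exact humono hpI hyI hy.1, humono hyI hxI hy.2⟩
      · intro hsmem
        have hsI : s ∈ Icc (u a) (u c) :=
          ⟨(hα'.1.trans hsmem.1).le, hsmem.2.le.trans (humono.monotoneOn hxI hcIcc hxI.2)⟩
        have huxI : u x ∈ Icc (u a) (u c) :=
          ⟨humono.monotoneOn haIcc hxI hxI.1, humono.monotoneOn hxI hcIcc hxI.2⟩
        refine ⟨w s, ⟨?_, ?_⟩, hw_inv₂ s hsI⟩
        · exact hwmono hα'I hsI hsmem.1
        · have := hwmono hsI huxI hsmem.2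
          rwa [hw_inv₁ x hxI] at this
    -- pointwise identity for the substituted integrand
    have hptwise : ∀ x ∈ Icc p c, ∀ y ∈ Ioo p x,
        |u' y| * (-u'' (w (u y)) * (W (u y)) ^ 3) = -u'' y / u' y ^ 2 := by
      intro x hx y hy
      have hyIoc : y ∈ Ioc a c := ⟨hpIoc.1.trans hy.1, hy.2.le.trans hx.2⟩
      have hyIcc : y ∈ Icc a c := ⟨hyIoc.1.le, hyIoc.2⟩
      have hwy : w (u y) = y := hw_inv₁ y hyIcc
      have huy : u y ∈ Ioc (u a) (u c) :=
        ⟨humono haIcc hyIcc hyIoc.1, humono.monotoneOn hyIcc hcIcc hyIcc.2⟩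
      rw [hWIoc (u y) huy, hwy, abs_of_pos (hu'_pos y hyIoc)]
      have h3 : u' y ≠ 0 := (hu'_pos y hyIoc).ne'
      field_simp
    have hder : ∀ x ∈ Icc p c, ∀ y ∈ Ioo p x, HasDerivWithinAt u (u' y) (Ioo p x) y := by
      intro x hx y hy
      exact (hu_deriv y ⟨hpIoc.1.trans hy.1, hy.2.trans_le hx.2⟩).hasDerivWithinAt
    have hinj : ∀ x ∈ Icc p c, InjOn u (Ioo p x) := by
      intro x hx
      have hss : Ioo p x ⊆ Icc a c := fun y hy =>
        ⟨(hpIoc.1.trans hy.1).le, (hy.2.trans_le hx.2).le⟩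
      exact humono.injOn.mono hss
    have hsubst : ∀ x ∈ Icc p c, (∫ s in Ioo α' (u x), (-u'' (w s) * W s ^ 3))
        = ∫ y in Ioo p x, -u'' y / u' y ^ 2 := by
      intro x hx
      rw [← himg x hx,
        integral_image_eq_integral_abs_deriv_smul measurableSet_Ioo (hder x hx) (hinj x hx)]
      refine setIntegral_congr_fun measurableSet_Ioo fun y hy => ?_
      simpa [smul_eq_mul] using hptwise x hx y hy
    have hGint : IntegrableOn (fun y => -u'' y / u' y ^ 2) (Icc p c) := by
      have h2 : ContinuousOn (fun y => -(u' y ^ 2)⁻¹) (Icc p c) :=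
        ((hv_cont.pow 2).inv₀ fun y hy => pow_ne_zero 2 (hv_pos y hy).ne').neg
      refine (hgint.mul_continuousOn h2 isCompact_Icc).congr_fun ?_ measurableSet_Icc
      intro y hy
      ring
    constructor
    · -- integrability
      rw [integrableOn_Icc_iff_integrableOn_Ioo]
      have himgc : Ioo α' (u c) = u '' Ioo p c := (himg c ⟨hpIoc.2, le_rfl⟩).symm
      rw [himgc,
        integrableOn_image_iff_integrableOn_abs_deriv_smul measurableSet_Ioo
          (hder c ⟨hpIoc.2, le_rfl⟩) (hinj c ⟨hpIoc.2, le_rfl⟩)]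
      refine (hGint.mono_set Ioo_subset_Icc_self).congr_fun ?_ measurableSet_Ioo
      intro y hy
      simpa [smul_eq_mul] using (hptwise c ⟨hpIoc.2, le_rfl⟩ y hy).symm
    · -- the integral representation
      intro t ht
      have htI : t ∈ Icc (u a) (u c) := ⟨hα'.1.le.trans ht.1, ht.2⟩
      have hxIcc : w t ∈ Icc p c := ⟨hwmono.monotoneOn hα'I htI ht.1, (hwmem t htI).2⟩
      have hut : u (w t) = t := hw_inv₂ t htI
      have hkey : (∫ s in α'..t, (-u'' (w s) * W s ^ 3)) = W t - W α' := by
        rw [intervalIntegral.integral_of_le ht.1, ← setIntegral_congr_set Ioo_ae_eq_Ioc]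
        have h1 := hsubst (w t) hxIcc
        rw [hut] at h1
        rw [h1, setIntegral_congr_set Ioo_ae_eq_Ioc, hcore (w t) hxIcc]
        rw [hWIoc t ⟨hα'.1.trans_le ht.1, ht.2⟩, hWIoc α' hα', one_div, one_div]
      rw [hkey]
      ring
end

section
/- The inverse of a solution of the curvature equation solves the reflected equation (step in the proof of Theorem 3.2). Let f : (a,c) × ℝ → ℝ. Let u : [a,c] → ℝ be continuous, continuously differentiable on (a,c] with u'(x) > 0 for all x ∈ (a,c], u' locally absolutely continuous on (a,c], u concave, lim_{x→a⁺} u'(x) = +∞, and −u''(x) = f(x, u(x)) (1 + u'(x)²)^{3/2} for almost every x ∈ (a,c). Set α = u(a), ω = u(c), and let w : [α,ω] → [a,c] be the inverse function of u. Then w is continuously differentiable on [α,ω] with w(α) = a and w'(α) = 0, w' is locally absolutely continuous on (α,ω], and w''(t) = f(w(t), t) (1 + w'(t)²)^{3/2} for almost every t ∈ (α,ω). -/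
open Set Filter MeasureTheory Topology


/-- A strictly monotone function on a closed interval whose image is the
corresponding closed interval is continuous on that interval. -/
lemma contOn_of_strictMonoOn_Icc {f : ℝ → ℝ} {p q : ℝ} (hpq : p ≤ q)
    (hmono : StrictMonoOn f (Icc p q)) (himg : f '' (Icc p q) = Icc (f p) (f q)) :
    ContinuousOn f (Icc p q) := by
  have hmonoOn : MonotoneOn f (Icc p q) := hmono.monotoneOn
  have hpm : p ∈ Icc p q := left_mem_Icc.2 hpq
  have hqm : q ∈ Icc p q := right_mem_Icc.2 hpq
  intro t ht
  have hR : t < q → ContinuousWithinAt f (Ici t) t := by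
    intro htq
    refine hmono.continuousWithinAt_right_of_exists_between
      (mem_of_superset (Icc_mem_nhdsGE_of_mem (left_mem_Ico.2 htq))
        (Icc_subset_Icc ht.1 le_rfl)) ?_
    intro b hb
    have hfq : f t < f q := hmono ht hqm htq
    have hb' : min b (f q) ∈ Icc (f p) (f q) :=
      ⟨le_min (le_of_lt (lt_of_le_of_lt (hmonoOn hpm ht ht.1) hb))
        (hmonoOn hpm hqm hpq), min_le_right _ _⟩
    rw [← himg] at hb'
    obtain ⟨z, hz, hfz⟩ := hb'
    exact ⟨z, hz, by rw [hfz]; exact lt_min hb hfq, by rw [hfz]; exact min_le_left _ _⟩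
  have hL : p < t → ContinuousWithinAt f (Iic t) t := by
    intro hpt
    refine hmono.continuousWithinAt_left_of_exists_between
      (mem_of_superset (Icc_mem_nhdsLE_of_mem (right_mem_Ioc.2 hpt))
        (Icc_subset_Icc le_rfl ht.2)) ?_
    intro b hb
    have hfp : f p < f t := hmono hpm ht hpt
    have hb' : max b (f p) ∈ Icc (f p) (f q) :=
      ⟨le_max_right _ _, max_le (le_of_lt (lt_of_lt_of_le hb (hmonoOn ht hqm ht.2)))
        (hmonoOn hpm hqm hpq)⟩
    rw [← himg] at hb'
    obtain ⟨z, hz, hfz⟩ := hb'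
    exact ⟨z, hz, by rw [hfz]; exact le_max_left _ _, by rw [hfz]; exact max_lt hb hfp⟩
  rcases eq_or_lt_of_le ht.1 with h1 | h1
  · rcases eq_or_lt_of_le ht.2 with h2 | h2
    · subst h1; subst h2
      rw [Icc_self]; exact continuousWithinAt_singleton
    · exact (hR h2).mono (fun y hy => h1 ▸ hy.1)
  · rcases eq_or_lt_of_le ht.2 with h2 | h2
    · exact (hL h1).mono (fun y hy => h2 ▸ hy.2)
    · exact ((hL h1).union (hR h2)).mono (fun y _ => (le_total y t).elim Or.inl Or.inr)


/-- If `v` is given on `[a,c]` as `v a` plus the integral of an integrable function `g`,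
and `v > 0` on `[a,c]`, then `1/v` is given by the integral of `-g/v²`. -/
lemma inv_integral_rep {a c : ℝ} (hac : a ≤ c) {v g : ℝ → ℝ}
    (hg : IntegrableOn g (Icc a c))
    (hv : ∀ y ∈ Icc a c, v y = v a + ∫ t in a..y, g t)
    (hpos : ∀ y ∈ Icc a c, 0 < v y) :
    ∀ x ∈ Icc a c, (v x)⁻¹ = (v a)⁻¹ + ∫ y in a..x, -g y / (v y) ^ 2 := by
  have hvc : ContinuousOn v (Icc a c) := by
    have h := intervalIntegral.continuousOn_primitive_interval
      (f := g) (a := a) (b := c) (by rwa [uIcc_of_le hac])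
    rw [uIcc_of_le hac] at h
    exact (continuousOn_const.add h).congr hv
  have hne : (Icc a c).Nonempty := ⟨a, left_mem_Icc.2 hac⟩
  obtain ⟨y₀, hy₀, hy₀min⟩ := isCompact_Icc.exists_isMinOn hne hvc
  obtain ⟨m, hm, hmle⟩ : ∃ m : ℝ, 0 < m ∧ ∀ y ∈ Icc a c, m ≤ v y :=
    ⟨v y₀, hpos _ hy₀, fun y hy => hy₀min hy⟩
  obtain ⟨M, hM⟩ := isCompact_Icc.exists_bound_of_continuousOn hvc
  have hmM : m ≤ M := le_trans (hmle y₀ hy₀) (le_trans (le_abs_self _) (by simpa using hM y₀ hy₀))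
  have hM0 : 0 < M := lt_of_lt_of_le hm hmM
  obtain ⟨G, hG_def⟩ : ∃ G : ℝ, G = ∫ y in Icc a c, |g y| := ⟨_, rfl⟩
  have hG0 : 0 ≤ G := hG_def ▸ setIntegral_nonneg measurableSet_Icc (fun y _ => abs_nonneg _)
  obtain ⟨K, hK_def⟩ : ∃ K : ℝ, K = 6 / m ^ 2 + 4 * (2 * M + m) / m ^ 4 * G + 1 := ⟨_, rfl⟩
  have hK1 : (1:ℝ) ≤ K := by
    have h1 : 0 ≤ 6 / m ^ 2 := by positivity
    have h2 : 0 ≤ 4 * (2 * M + m) / m ^ 4 * G := by positivity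
    rw [hK_def]; linarith
  have hK0 : 0 < K := lt_of_lt_of_le one_pos hK1
  have hvsq_cont : ContinuousOn (fun y => ((v y) ^ 2)⁻¹) (Icc a c) :=
    ((hvc.pow 2).inv₀ (fun y hy => pow_ne_zero 2 (hpos y hy).ne'))
  have hI_int : IntegrableOn (fun y => -g y / (v y) ^ 2) (Icc a c) := by
    have hneg : IntegrableOn (fun y => -g y) (Icc a c) := hg.neg
    have := hneg.mul_continuousOn hvsq_cont isCompact_Icc
    simpa [div_eq_mul_inv] using this
  intro x hx
  have hax : a ≤ x := hx.1
  have hIccsub : Icc a x ⊆ Icc a c := Icc_subset_Icc le_rfl hx.2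
  obtain ⟨r, hr_def⟩ : ∃ r : ℝ,
      r = (v x)⁻¹ - (v a)⁻¹ - ∫ y in a..x, -g y / (v y) ^ 2 := ⟨_, rfl⟩
  suffices h : ∀ δ : ℝ, 0 < δ → |r| ≤ δ by
    have h0 : |r| ≤ 0 := le_of_forall_pos_le_add (fun ε hε => by simpa using h ε hε)
    have hr0 : r = 0 := abs_eq_zero.1 (le_antisymm h0 (abs_nonneg _))
    rw [hr_def] at hr0; linarith
  intro δ hδ
  obtain ⟨ε, hε, hεm, hεδ⟩ : ∃ ε : ℝ, 0 < ε ∧ ε ≤ m / 2 ∧ ε ≤ δ / K :=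
    ⟨min (m / 2) (δ / K), lt_min (by positivity) (by positivity),
      min_le_left _ _, min_le_right _ _⟩
  obtain ⟨gI, hgI_def⟩ : ∃ gI : ℝ → ℝ, gI = (Icc a c).indicator g := ⟨_, rfl⟩
  have hgI : Integrable gI := hgI_def ▸ (integrable_indicator_iff measurableSet_Icc).2 hg
  obtain ⟨g₀, -, hg₀close, hg₀cont, hg₀int⟩ :=
    hgI.exists_hasCompactSupport_integral_sub_le hε
  -- closeness of set integrals of |g - g₀| on subsets of Icc a c
  have hgg₀ : ∀ s : Set ℝ, MeasurableSet s → s ⊆ Icc a c →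
      (∫ y in s, |g y - g₀ y|) ≤ ε := by
    intro s hsm hs
    have h1 : EqOn (fun y => |g y - g₀ y|) (fun y => ‖gI y - g₀ y‖) s := by
      intro y hy
      simp only [hgI_def, indicator_of_mem (hs hy), Real.norm_eq_abs]
    calc (∫ y in s, |g y - g₀ y|) = ∫ y in s, ‖gI y - g₀ y‖ :=
          setIntegral_congr_fun hsm h1
      _ ≤ ∫ y, ‖gI y - g₀ y‖ :=
          setIntegral_le_integral ((hgI.sub hg₀int).norm)
            (Eventually.of_forall fun y => norm_nonneg _)
      _ ≤ ε := hg₀close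
  obtain ⟨v₀, hv₀_def⟩ : ∃ v₀ : ℝ → ℝ, v₀ = fun y => v a + ∫ t in a..y, g₀ t := ⟨_, rfl⟩
  have hv₀a : v₀ a = v a := by rw [hv₀_def]; simp
  have hv₀close : ∀ y ∈ Icc a c, |v₀ y - v y| ≤ ε := by
    intro y hy
    have hgy : IntervalIntegrable g volume a y :=
      (intervalIntegrable_iff_integrableOn_Icc_of_le hy.1).2
        (hg.mono_set (Icc_subset_Icc le_rfl hy.2))
    have hg₀y : IntervalIntegrable g₀ volume a y := hg₀cont.intervalIntegrable a y
    have h2 : v₀ y - v y = ∫ t in a..y, (g₀ t - g t) := by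
      rw [intervalIntegral.integral_sub hg₀y hgy, hv₀_def, hv y hy]; ring
    rw [h2]
    calc |∫ t in a..y, (g₀ t - g t)| ≤ ∫ t in a..y, |g₀ t - g t| :=
        intervalIntegral.abs_integral_le_integral_abs hy.1
      _ = ∫ t in Ioc a y, |g₀ t - g t| := intervalIntegral.integral_of_le hy.1
      _ = ∫ t in Ioc a y, |g t - g₀ t| := by simp [abs_sub_comm]
      _ ≤ ε := hgg₀ _ measurableSet_Ioc
          ((Ioc_subset_Icc_self).trans (Icc_subset_Icc le_rfl hy.2))
  have hv₀m : ∀ y ∈ Icc a c, m / 2 ≤ v₀ y := by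
    intro y hy
    have h1 := (abs_le.1 (hv₀close y hy)).1
    have h2 := hmle y hy
    linarith
  have hv₀pos : ∀ y ∈ Icc a c, 0 < v₀ y := fun y hy =>
    lt_of_lt_of_le (by positivity) (hv₀m y hy)
  have hv₀M : ∀ y ∈ Icc a c, |v₀ y| ≤ M + m := by
    intro y hy
    have h1 := abs_sub_abs_le_abs_sub (v₀ y) (v y)
    have h2 := hv₀close y hy
    have h3 := hM y hy
    rw [Real.norm_eq_abs] at h3
    linarith
  have hv₀deriv : ∀ y : ℝ, HasDerivAt v₀ (g₀ y) y := by
    intro y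
    have h := intervalIntegral.integral_hasDerivAt_right
      (hg₀cont.intervalIntegrable a y)
      (hg₀cont.stronglyMeasurableAtFilter _ _) hg₀cont.continuousAt
    rw [hv₀_def]
    simpa using h
  have hv₀c : Continuous v₀ := continuous_iff_continuousAt.2 fun y => (hv₀deriv y).continuousAt
  have hFTC : ∫ y in a..x, -g₀ y / (v₀ y) ^ 2 = (v₀ x)⁻¹ - (v₀ a)⁻¹ := by
    refine intervalIntegral.integral_eq_sub_of_hasDerivAt
      (f := fun y => (v₀ y)⁻¹) (f' := fun y => -g₀ y / (v₀ y) ^ 2) ?_ ?_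
    · intro y hy
      rw [uIcc_of_le hax] at hy
      exact (hv₀deriv y).inv (hv₀pos y (hIccsub hy)).ne'
    · apply ContinuousOn.intervalIntegrable
      rw [uIcc_of_le hax]
      exact (hg₀cont.continuousOn.neg.div (hv₀c.continuousOn.pow 2)
        (fun y hy => pow_ne_zero 2 (hv₀pos y (hIccsub hy)).ne'))
  -- term 1
  have hvx := hpos x hx
  have hv₀x := hv₀pos x hx
  have hT1 : |(v x)⁻¹ - (v₀ x)⁻¹| ≤ 2 * ε / m ^ 2 := by
    have hxm := hmle x hx
    have hx₀m := hv₀m x hx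
    have heq1 : (v x)⁻¹ - (v₀ x)⁻¹ = (v₀ x - v x) / (v x * v₀ x) := by
      field_simp
    rw [heq1, abs_div]
    have hden : m * (m / 2) ≤ |v x * v₀ x| := by
      rw [abs_of_pos (mul_pos hvx hv₀x)]
      exact mul_le_mul hxm hx₀m (by positivity) hvx.le
    have hnum : |v₀ x - v x| ≤ ε := hv₀close x hx
    calc |v₀ x - v x| / |v x * v₀ x| ≤ ε / (m * (m / 2)) :=
        div_le_div₀ hε.le hnum (by positivity) hden
      _ = 2 * ε / m ^ 2 := by ring
  -- term 2
  obtain ⟨C2, hC2_def⟩ : ∃ C2 : ℝ, C2 = ε * (4 * (2 * M + m) / m ^ 4) := ⟨_, rfl⟩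
  have hptw : ∀ y ∈ Icc a c,
      |g y / (v y) ^ 2 - g₀ y / (v₀ y) ^ 2| ≤ 4 / m ^ 2 * |g y - g₀ y| + C2 * |g y| := by
    intro y hy
    have hvyp := hpos y hy
    have hv₀yp := hv₀pos y hy
    have hvy := hmle y hy
    have hv₀y := hv₀m y hy
    have hvyM := hM y hy
    rw [Real.norm_eq_abs] at hvyM
    have hv₀yM := hv₀M y hy
    have h1 : g y / (v y) ^ 2 - g₀ y / (v₀ y) ^ 2
        = (g y - g₀ y) / (v₀ y) ^ 2 + g y * (1 / (v y) ^ 2 - 1 / (v₀ y) ^ 2) := by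
      field_simp
      ring
    rw [h1]
    have e1 : |(g y - g₀ y) / (v₀ y) ^ 2| ≤ 4 / m ^ 2 * |g y - g₀ y| := by
      rw [abs_div, abs_of_nonneg (sq_nonneg (v₀ y))]
      have hd : m ^ 2 / 4 ≤ (v₀ y) ^ 2 := by
        have h5 := pow_le_pow_left₀ (by positivity : (0:ℝ) ≤ m / 2) hv₀y 2
        calc m ^ 2 / 4 = (m / 2) ^ 2 := by ring
          _ ≤ _ := h5
      calc |g y - g₀ y| / (v₀ y) ^ 2 ≤ |g y - g₀ y| / (m ^ 2 / 4) :=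
          div_le_div_of_nonneg_left (abs_nonneg _) (by positivity) hd
        _ = 4 / m ^ 2 * |g y - g₀ y| := by
          field_simp
    have e2 : |g y * (1 / (v y) ^ 2 - 1 / (v₀ y) ^ 2)| ≤ C2 * |g y| := by
      rw [abs_mul]
      have h2 : 1 / (v y) ^ 2 - 1 / (v₀ y) ^ 2
          = (v₀ y - v y) * (v₀ y + v y) / ((v y) ^ 2 * (v₀ y) ^ 2) := by
        field_simp
        ring
      have h3 : |1 / (v y) ^ 2 - 1 / (v₀ y) ^ 2| ≤ 4 * (2 * M + m) / m ^ 4 * ε := by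
        rw [h2, abs_div, abs_mul]
        have hd : m ^ 2 * (m ^ 2 / 4) ≤ |(v y) ^ 2 * (v₀ y) ^ 2| := by
          rw [abs_of_nonneg (by positivity)]
          have hd1 : m ^ 2 ≤ (v y) ^ 2 := pow_le_pow_left₀ hm.le hvy 2
          have hd2 : m ^ 2 / 4 ≤ (v₀ y) ^ 2 := by
            have h5 := pow_le_pow_left₀ (by positivity : (0:ℝ) ≤ m / 2) hv₀y 2
            calc m ^ 2 / 4 = (m / 2) ^ 2 := by ring
              _ ≤ _ := h5
          have := mul_le_mul hd1 hd2 (by positivity) (by positivity)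
          linarith
        have hn1 : |v₀ y - v y| ≤ ε := hv₀close y hy
        have hn2 : |v₀ y + v y| ≤ 2 * M + m := by
          calc |v₀ y + v y| ≤ |v₀ y| + |v y| := abs_add_le _ _
            _ ≤ (M + m) + M := add_le_add hv₀yM hvyM
            _ = 2 * M + m := by ring
        calc |v₀ y - v y| * |v₀ y + v y| / |(v y) ^ 2 * (v₀ y) ^ 2|
            ≤ ε * (2 * M + m) / (m ^ 2 * (m ^ 2 / 4)) :=
            div_le_div₀ (by positivity)
              (mul_le_mul hn1 hn2 (abs_nonneg _) hε.le) (by positivity) hd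
          _ = 4 * (2 * M + m) / m ^ 4 * ε := by
            field_simp
      calc |g y| * |1 / (v y) ^ 2 - 1 / (v₀ y) ^ 2|
          ≤ |g y| * (4 * (2 * M + m) / m ^ 4 * ε) :=
          mul_le_mul_of_nonneg_left h3 (abs_nonneg _)
        _ = C2 * |g y| := by rw [hC2_def]; ring
    calc |(g y - g₀ y) / (v₀ y) ^ 2 + g y * (1 / (v y) ^ 2 - 1 / (v₀ y) ^ 2)|
        ≤ |(g y - g₀ y) / (v₀ y) ^ 2| + |g y * (1 / (v y) ^ 2 - 1 / (v₀ y) ^ 2)| := abs_add_le _ _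
      _ ≤ 4 / m ^ 2 * |g y - g₀ y| + C2 * |g y| := add_le_add e1 e2
  -- integrability facts
  have hint_gg₀ : IntegrableOn (fun y => |g y - g₀ y|) (Icc a c) :=
    ((hg.sub hg₀int.integrableOn).abs)
  have hintB : IntegrableOn (fun y => 4 / m ^ 2 * |g y - g₀ y| + C2 * |g y|) (Icc a c) :=
    (hint_gg₀.const_mul _).add ((hg.abs).const_mul _)
  have hI₀_int : IntegrableOn (fun y => -g₀ y / (v₀ y) ^ 2) (Icc a c) := by
    apply ContinuousOn.integrableOn_compact isCompact_Icc
    exact (hg₀cont.continuousOn.neg.div (hv₀c.continuousOn.pow 2)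
      (fun y hy => pow_ne_zero 2 (hv₀pos y hy).ne'))
  have hdiff_int : IntegrableOn (fun y => g y / (v y) ^ 2 - g₀ y / (v₀ y) ^ 2) (Icc a c) :=
    (hI₀_int.sub hI_int).congr (Eventually.of_forall fun y => by
      simp only [Pi.sub_apply]; ring)
  -- term 2 bound
  have hdiffI : (∫ y in a..x, -g₀ y / (v₀ y) ^ 2) - (∫ y in a..x, -g y / (v y) ^ 2)
      = ∫ y in a..x, (g y / (v y) ^ 2 - g₀ y / (v₀ y) ^ 2) := by
    rw [← intervalIntegral.integral_sub
      ((intervalIntegrable_iff_integrableOn_Icc_of_le hax).2 (hI₀_int.mono_set hIccsub))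
      ((intervalIntegrable_iff_integrableOn_Icc_of_le hax).2 (hI_int.mono_set hIccsub))]
    congr 1
    ext y
    ring
  have hT2 : |∫ y in a..x, (g y / (v y) ^ 2 - g₀ y / (v₀ y) ^ 2)| ≤ 4 / m ^ 2 * ε + C2 * G := by
    have hsub : Ioc a x ⊆ Icc a c := Ioc_subset_Icc_self.trans hIccsub
    calc |∫ y in a..x, (g y / (v y) ^ 2 - g₀ y / (v₀ y) ^ 2)|
        ≤ ∫ y in a..x, |g y / (v y) ^ 2 - g₀ y / (v₀ y) ^ 2| :=
        intervalIntegral.abs_integral_le_integral_abs hax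
      _ = ∫ y in Ioc a x, |g y / (v y) ^ 2 - g₀ y / (v₀ y) ^ 2| :=
        intervalIntegral.integral_of_le hax
      _ ≤ ∫ y in Ioc a x, (4 / m ^ 2 * |g y - g₀ y| + C2 * |g y|) := by
        apply setIntegral_mono_on ((hdiff_int.mono_set hsub).abs)
          (hintB.mono_set hsub) measurableSet_Ioc
        intro y hy
        exact hptw y (hsub hy)
      _ ≤ ∫ y in Icc a c, (4 / m ^ 2 * |g y - g₀ y| + C2 * |g y|) := by
        have hC20 : 0 ≤ C2 := by rw [hC2_def]; positivity
        apply setIntegral_mono_set hintB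
        · exact Eventually.of_forall fun y => add_nonneg
            (mul_nonneg (by positivity) (abs_nonneg _)) (mul_nonneg hC20 (abs_nonneg _))
        · exact HasSubset.Subset.eventuallyLE hsub
      _ = 4 / m ^ 2 * (∫ y in Icc a c, |g y - g₀ y|) + C2 * G := by
        rw [integral_add (hint_gg₀.const_mul _) ((hg.abs).const_mul _),
          integral_const_mul, integral_const_mul, hG_def]
      _ ≤ 4 / m ^ 2 * ε + C2 * G := by
        have h5 := hgg₀ (Icc a c) measurableSet_Icc (le_refl _)
        have h4 : (0:ℝ) ≤ 4 / m ^ 2 := by positivity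
        have h6 := mul_le_mul_of_nonneg_left h5 h4
        rw [hG_def]
        linarith
  -- put everything together
  have hrsplit : r = ((v x)⁻¹ - (v₀ x)⁻¹)
      + ∫ y in a..x, (g y / (v y) ^ 2 - g₀ y / (v₀ y) ^ 2) := by
    rw [hr_def, ← hdiffI, hFTC, hv₀a]
    ring
  have hGbound : G ≥ 0 := hG0
  calc |r| ≤ |(v x)⁻¹ - (v₀ x)⁻¹|
        + |∫ y in a..x, (g y / (v y) ^ 2 - g₀ y / (v₀ y) ^ 2)| := by
        rw [hrsplit]; exact abs_add_le _ _
    _ ≤ 2 * ε / m ^ 2 + (4 / m ^ 2 * ε + C2 * G) := add_le_add hT1 hT2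
    _ = ε * (K - 1) := by rw [hK_def, hC2_def]; ring
    _ ≤ ε * K := mul_le_mul_of_nonneg_left (by linarith) hε.le
    _ ≤ (δ / K) * K := mul_le_mul_of_nonneg_right hεδ hK0.le
    _ = δ := div_mul_cancel₀ δ hK0.ne'

/-- **The inverse of a solution of the curvature equation solves the reflected equation (step in
the proof of Theorem 3.2).** If `u : [a,c] → ℝ` is continuous, C¹ on `(a,c]` with `u' > 0`
there, `u'` locally absolutely continuous on `(a,c]`, `u` concave, `u'(a⁺) = +∞`, and
`-u'' = f(x,u)(1+u'²)^{3/2}` a.e. in `(a,c)`, then the inverse `w : [α,ω] → [a,c]`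
(with `α = u(a)`, `ω = u(c)`) is C¹ on `[α,ω]` with `w(α) = a`, `w'(α) = 0`, `w'` locally
absolutely continuous on `(α,ω]`, and `w'' = f(w,t)(1+w'²)^{3/2}` a.e. in `(α,ω)`. -/
theorem inverse_solves_reflected_curvature_equation
    (a c : ℝ) (hac : a < c) (f : ℝ → ℝ → ℝ) (u u' u'' : ℝ → ℝ)
    (hu_cont : ContinuousOn u (Icc a c))
    -- u continuously differentiable on (a,c] with u' > 0
    (hu_deriv : ∀ x ∈ Ioo a c, HasDerivAt u (u' x) x)
    (hu_derivc : HasDerivWithinAt u (u' c) (Iic c) c)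
    (hu'_cont : ContinuousOn u' (Ioc a c))
    (hu'_pos : ∀ x ∈ Ioc a c, 0 < u' x)
    -- u' locally absolutely continuous on (a,c] with a.e. derivative u''
    (hu'_locAC : ∀ a' ∈ Ioc a c, IntegrableOn u'' (Icc a' c) ∧
      ∀ x ∈ Icc a' c, u' x = u' a' + ∫ t in a'..x, u'' t)
    -- u concave on [a,c]
    (hconc : ConcaveOn ℝ (Icc a c) u)
    -- vertical tangent at a
    (hblow : Tendsto u' (𝓝[>] a) atTop)
    -- the prescribed curvature equation a.e. in (a,c)
    (heq : ∀ᵐ x ∂volume, x ∈ Ioo a c →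
      -u'' x = f x (u x) * (1 + u' x ^ 2) ^ ((3:ℝ)/2))
    -- w is the inverse function of u on [a,c]
    (w : ℝ → ℝ)
    (hw_inv₁ : ∀ x ∈ Icc a c, w (u x) = x)
    (hw_inv₂ : ∀ t ∈ Icc (u a) (u c), u (w t) = t) :
    ∃ w' : ℝ → ℝ,
      -- w is continuously differentiable on [α,ω] = [u a, u c]
      ContinuousOn w' (Icc (u a) (u c)) ∧
      (∀ t ∈ Icc (u a) (u c), HasDerivWithinAt w (w' t) (Icc (u a) (u c)) t) ∧
      (∀ t ∈ Ioo (u a) (u c), HasDerivAt w (w' t) t) ∧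
      w (u a) = a ∧ w' (u a) = 0 ∧
      -- w' is locally absolutely continuous on (α,ω] and
      -- w'' = f(w(t),t)(1+w'(t)²)^{3/2} a.e. in (α,ω)
      (∀ α' ∈ Ioc (u a) (u c),
        IntegrableOn (fun t => f (w t) t * (1 + (w' t) ^ 2) ^ ((3:ℝ)/2)) (Icc α' (u c)) ∧
        ∀ t ∈ Icc α' (u c),
          w' t = w' α' + ∫ s in α'..t, f (w s) s * (1 + (w' s) ^ 2) ^ ((3:ℝ)/2)) := by
  -- strict monotonicity of u
  have hmono : StrictMonoOn u (Icc a c) := by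
    apply strictMonoOn_of_deriv_pos (convex_Icc a c) hu_cont
    intro x hx
    rw [interior_Icc] at hx
    rw [(hu_deriv x hx).deriv]
    exact hu'_pos x ⟨hx.1, hx.2.le⟩
  have haIcc : a ∈ Icc a c := left_mem_Icc.2 hac.le
  have hcIcc : c ∈ Icc a c := right_mem_Icc.2 hac.le
  have hαω : u a < u c := hmono haIcc hcIcc hac
  have hwa : w (u a) = a := hw_inv₁ a haIcc
  have hwc : w (u c) = c := hw_inv₁ c hcIcc
  -- image of subintervals
  have himg : ∀ p ∈ Icc a c, ∀ q ∈ Icc a c, p ≤ q → u '' Icc p q = Icc (u p) (u q) := by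
    intro p hp q hq hpq
    apply Subset.antisymm
    · rintro _ ⟨z, hz, rfl⟩
      have hz' : z ∈ Icc a c := ⟨le_trans hp.1 hz.1, le_trans hz.2 hq.2⟩
      exact ⟨hmono.monotoneOn hp hz' hz.1, hmono.monotoneOn hz' hq hz.2⟩
    · exact intermediate_value_Icc hpq (hu_cont.mono (Icc_subset_Icc hp.1 hq.2))
  -- w maps into Icc a c
  have hwmem : ∀ t ∈ Icc (u a) (u c), w t ∈ Icc a c := by
    intro t ht
    have h1 : t ∈ u '' Icc a c := by rw [himg a haIcc c hcIcc hac.le]; exact ht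
    obtain ⟨z, hz, rfl⟩ := h1
    rw [hw_inv₁ z hz]; exact hz
  have hwmono : StrictMonoOn w (Icc (u a) (u c)) := by
    intro t1 h1 t2 h2 h12
    by_contra hcon
    push_neg at hcon
    have h3 := hmono.monotoneOn (hwmem t2 h2) (hwmem t1 h1) hcon
    rw [hw_inv₂ t1 h1, hw_inv₂ t2 h2] at h3
    exact absurd h3 (not_le.2 h12)
  have hwimg : w '' Icc (u a) (u c) = Icc (w (u a)) (w (u c)) := by
    rw [hwa, hwc]
    apply Subset.antisymm
    · rintro _ ⟨t, ht, rfl⟩; exact hwmem t ht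
    · intro z hz
      exact ⟨u z, ⟨hmono.monotoneOn haIcc hz hz.1, hmono.monotoneOn hz hcIcc hz.2⟩,
        hw_inv₁ z hz⟩
  have hw_cont : ContinuousOn w (Icc (u a) (u c)) :=
    contOn_of_strictMonoOn_Icc hαω.le hwmono hwimg
  have hwmemIoc : ∀ t ∈ Ioc (u a) (u c), w t ∈ Ioc a c := by
    intro t ht
    have h1 := hwmem t ⟨ht.1.le, ht.2⟩
    refine ⟨lt_of_le_of_ne h1.1 ?_, h1.2⟩
    intro hwt
    have h2 := hw_inv₂ t ⟨ht.1.le, ht.2⟩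
    rw [← hwt] at h2
    exact absurd h2 (ne_of_lt ht.1)
  have hwmemIoo : ∀ t ∈ Ioo (u a) (u c), w t ∈ Ioo a c := by
    intro t ht
    have h1 := hwmemIoc t ⟨ht.1, ht.2.le⟩
    refine ⟨h1.1, lt_of_le_of_ne h1.2 ?_⟩
    intro hwt
    have h2 := hw_inv₂ t ⟨ht.1.le, ht.2.le⟩
    rw [hwt] at h2
    exact absurd h2 (ne_of_gt ht.2)
  -- the candidate derivative
  obtain ⟨W, hWle, hWgt⟩ : ∃ W : ℝ → ℝ, (∀ t, t ≤ u a → W t = 0) ∧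
      (∀ t, u a < t → W t = (u' (w t))⁻¹) :=
    ⟨fun t => if t ≤ u a then 0 else (u' (w t))⁻¹,
      fun t ht => if_pos ht, fun t ht => if_neg (not_le.2 ht)⟩
  have hWa : W (u a) = 0 := hWle _ le_rfl
  -- limit of w at (u a)⁺
  have htw : Tendsto w (𝓝[>] (u a)) (𝓝[>] a) := by
    have h1 : Tendsto w (𝓝[Icc (u a) (u c)] (u a)) (𝓝 a) := by
      have h2 := hw_cont (u a) (left_mem_Icc.2 hαω.le)
      rw [ContinuousWithinAt, hwa] at h2; exact h2
    have h2 : Tendsto w (𝓝[Ioc (u a) (u c)] (u a)) (𝓝 a) :=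
      h1.mono_left (nhdsWithin_mono _ Ioc_subset_Icc_self)
    rw [nhdsWithin_Ioc_eq_nhdsGT hαω] at h2
    refine tendsto_nhdsWithin_iff.2 ⟨h2, ?_⟩
    filter_upwards [Ioc_mem_nhdsGT_of_mem (left_mem_Ico.2 hαω)] with t ht
    exact (hwmemIoc t ht).1
  have hWtend : Tendsto W (𝓝[>] (u a)) (𝓝 0) := by
    have h1 : Tendsto (fun t => (u' (w t))⁻¹) (𝓝[>] (u a)) (𝓝 0) :=
      (hblow.comp htw).inv_tendsto_atTop
    apply h1.congr'
    filter_upwards [self_mem_nhdsWithin] with t ht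
    exact (hWgt t ht).symm
  -- continuity of W
  have hWIoc : ContinuousOn W (Ioc (u a) (u c)) := by
    have h1 : ContinuousOn (fun t => (u' (w t))⁻¹) (Ioc (u a) (u c)) := by
      apply ContinuousOn.inv₀
      · exact hu'_cont.comp (hw_cont.mono Ioc_subset_Icc_self) hwmemIoc
      · intro t ht; exact (hu'_pos _ (hwmemIoc t ht)).ne'
    exact h1.congr (fun t ht => hWgt t ht.1)
  have hWcont : ContinuousOn W (Icc (u a) (u c)) := by
    intro t ht
    rcases eq_or_lt_of_le ht.1 with h1 | h1
    · rw [← h1]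
      have hgoal : Tendsto W (𝓝[Icc (u a) (u c)] (u a)) (𝓝 0) := by
        rw [show Icc (u a) (u c) = insert (u a) (Ioc (u a) (u c)) from
          (Ioc_insert_left hαω.le).symm, nhdsWithin_insert, tendsto_sup]
        constructor
        · rw [← hWa]; exact tendsto_pure_nhds W (u a)
        · rw [nhdsWithin_Ioc_eq_nhdsGT hαω]; exact hWtend
      rw [ContinuousWithinAt, hWa]
      exact hgoal
    · have hIoc_mem : Ioc (u a) (u c) ∈ 𝓝[Icc (u a) (u c)] t := by
        refine mem_nhdsWithin.2 ⟨Ioi (u a), isOpen_Ioi, h1, ?_⟩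
        rintro y ⟨hy1, hy2⟩; exact ⟨hy1, hy2.2⟩
      exact (hWIoc t ⟨h1, ht.2⟩).mono_of_mem_nhdsWithin hIoc_mem
  -- derivative at interior points
  have hWderiv : ∀ t ∈ Ioo (u a) (u c), HasDerivAt w (W t) t := by
    intro t ht
    have hwt := hwmemIoo t ht
    have hcw : ContinuousAt w t := hw_cont.continuousAt (Icc_mem_nhds ht.1 ht.2)
    have hfg : ∀ᶠ y in 𝓝 t, u (w y) = y := by
      filter_upwards [Ioo_mem_nhds ht.1 ht.2] with y hy
      exact hw_inv₂ y ⟨hy.1.le, hy.2.le⟩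
    have hu'w : u' (w t) ≠ 0 := (hu'_pos _ ⟨hwt.1, hwt.2.le⟩).ne'
    rw [hWgt t ht.1]
    exact HasDerivAt.of_local_left_inverse hcw (hu_deriv (w t) hwt) hu'w hfg
  -- one-sided derivatives at the endpoints
  have hWua : HasDerivWithinAt w (W (u a)) (Ici (u a)) (u a) := by
    rw [hWa]
    apply hasDerivWithinAt_Ici_of_tendsto_deriv (s := Ioo (u a) (u c))
    · exact fun t ht => ((hWderiv t ht).differentiableAt).differentiableWithinAt
    · exact (hw_cont _ (left_mem_Icc.2 hαω.le)).mono Ioo_subset_Icc_self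
    · exact Ioo_mem_nhdsGT_of_mem (left_mem_Ico.2 hαω)
    · apply hWtend.congr'
      filter_upwards [Ioo_mem_nhdsGT_of_mem (left_mem_Ico.2 hαω)] with t ht
      exact ((hWderiv t ht).deriv).symm
  have hWuc : HasDerivWithinAt w (W (u c)) (Iic (u c)) (u c) := by
    apply hasDerivWithinAt_Iic_of_tendsto_deriv (s := Ioo (u a) (u c))
    · exact fun t ht => ((hWderiv t ht).differentiableAt).differentiableWithinAt
    · exact (hw_cont _ (right_mem_Icc.2 hαω.le)).mono Ioo_subset_Icc_self
    · exact Ioo_mem_nhdsLT_of_mem (right_mem_Ioc.2 hαω)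
    · have h1 : Tendsto W (𝓝[Ioo (u a) (u c)] (u c)) (𝓝 (W (u c))) :=
        (hWcont _ (right_mem_Icc.2 hαω.le)).mono_left
          (nhdsWithin_mono _ Ioo_subset_Icc_self)
      rw [nhdsWithin_Ioo_eq_nhdsLT hαω] at h1
      apply h1.congr'
      filter_upwards [Ioo_mem_nhdsLT_of_mem (right_mem_Ioc.2 hαω)] with t ht
      exact ((hWderiv t ht).deriv).symm
  have hWderivWithin : ∀ t ∈ Icc (u a) (u c),
      HasDerivWithinAt w (W t) (Icc (u a) (u c)) t := by
    intro t ht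
    rcases eq_or_lt_of_le ht.1 with h1 | h1
    · rw [← h1]; exact hWua.mono Icc_subset_Ici_self
    rcases eq_or_lt_of_le ht.2 with h2 | h2
    · rw [h2]; exact hWuc.mono Icc_subset_Iic_self
    · exact (hWderiv t ⟨h1, h2⟩).hasDerivWithinAt
  refine ⟨W, hWcont, hWderivWithin, hWderiv, hwa, hWa, ?_⟩
  -- the integral identity
  intro α' hα'
  have hα'Icc : α' ∈ Icc (u a) (u c) := ⟨hα'.1.le, hα'.2⟩
  have ha'Ioc : w α' ∈ Ioc a c := hwmemIoc α' hα'
  have ha'Icc : w α' ∈ Icc a c := ⟨ha'Ioc.1.le, ha'Ioc.2⟩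
  have hua' : u (w α') = α' := hw_inv₂ α' hα'Icc
  obtain ⟨hu''int, hu'rep⟩ := hu'_locAC (w α') ha'Ioc
  have hinv := inv_integral_rep ha'Ioc.2 hu''int hu'rep
    (fun y hy => hu'_pos y ⟨lt_of_lt_of_le ha'Ioc.1 hy.1, hy.2⟩)
  -- a.e. equality of the transformed integrands
  have haeS : ∀ S : Set ℝ, MeasurableSet S → S ⊆ Icc (w α') c →
      (fun y => |u' y| • ((fun s => f (w s) s * (1 + (W s) ^ 2) ^ ((3:ℝ)/2)) (u y)))
        =ᵐ[volume.restrict S] (fun y => -u'' y / (u' y) ^ 2) := by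
    intro S hSm hS
    have h1 : ∀ᵐ y ∂volume.restrict S, y ∈ Ioo a c →
        -u'' y = f y (u y) * (1 + u' y ^ 2) ^ ((3:ℝ)/2) := ae_restrict_of_ae heq
    have h2 : ∀ᵐ y ∂volume.restrict S, y ∈ S := ae_restrict_mem hSm
    have h3 : ∀ᵐ y ∂volume.restrict S, y ≠ c := by
      apply ae_restrict_of_ae
      have h4 : {y : ℝ | ¬ y ≠ c} = {c} := by ext y; simp
      rw [ae_iff, h4]
      exact measure_singleton c
    filter_upwards [h1, h2, h3] with y hy1 hy2 hy3
    have hyIcc : y ∈ Icc (w α') c := hS hy2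
    have hyIoo : y ∈ Ioo a c :=
      ⟨lt_of_lt_of_le ha'Ioc.1 hyIcc.1, lt_of_le_of_ne hyIcc.2 hy3⟩
    have hyIccac : y ∈ Icc a c := ⟨hyIoo.1.le, hyIoo.2.le⟩
    have hwuy : w (u y) = y := hw_inv₁ y hyIccac
    have huy_gt : u a < u y := hmono haIcc hyIccac hyIoo.1
    have hp : 0 < u' y := hu'_pos y ⟨hyIoo.1, hyIoo.2.le⟩
    have hWuy : W (u y) = (u' y)⁻¹ := by rw [hWgt _ huy_gt, hwuy]
    have hfy := hy1 hyIoo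
    have hbase : (0:ℝ) < 1 + (u' y) ^ 2 := by positivity
    have hne : (1 + (u' y) ^ 2) ^ ((3:ℝ)/2) ≠ 0 := (Real.rpow_pos_of_pos hbase _).ne'
    have h32 : (1 + ((u' y)⁻¹) ^ 2) ^ ((3:ℝ)/2)
        = (1 + (u' y) ^ 2) ^ ((3:ℝ)/2) / (u' y) ^ 3 := by
      have h4 : 1 + ((u' y)⁻¹) ^ 2 = (1 + (u' y) ^ 2) / (u' y) ^ 2 := by
        field_simp
        ring
      rw [h4, Real.div_rpow hbase.le (by positivity)]
      congr 1
      rw [← Real.rpow_natCast (u' y) 2, ← Real.rpow_mul hp.le,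
        ← Real.rpow_natCast (u' y) 3]
      norm_num
    have hf_eq : f y (u y) = -u'' y / (1 + (u' y) ^ 2) ^ ((3:ℝ)/2) :=
      (eq_div_iff hne).2 hfy.symm
    simp only [hwuy, hWuy, smul_eq_mul]
    rw [abs_of_pos hp, h32, hf_eq]
    field_simp
  -- derivatives of u within subsets of [w α', c]
  have hderivS : ∀ S : Set ℝ, S ⊆ Icc (w α') c → ∀ y ∈ S,
      HasDerivWithinAt u (u' y) S y := by
    intro S hS y hy
    have hyIcc := hS hy
    rcases eq_or_lt_of_le hyIcc.2 with h2 | h2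
    · subst h2
      exact hu_derivc.mono (fun z hz => (hS hz).2)
    · exact (hu_deriv y ⟨lt_of_lt_of_le ha'Ioc.1 hyIcc.1, h2⟩).hasDerivWithinAt
  have hInjS : InjOn u (Icc (w α') c) :=
    hmono.injOn.mono (Icc_subset_Icc ha'Ioc.1.le le_rfl)
  have himgS : u '' Icc (w α') c = Icc α' (u c) := by
    rw [himg _ ha'Icc c hcIcc ha'Ioc.2, hua']
  -- integrability of the y-side integrand
  have hintY : IntegrableOn (fun y => -u'' y / (u' y) ^ 2) (Icc (w α') c) := by
    have hcont2 : ContinuousOn (fun y => -((u' y) ^ 2)⁻¹) (Icc (w α') c) := by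
      apply ContinuousOn.neg
      apply ContinuousOn.inv₀
      · exact (hu'_cont.mono (fun z hz => ⟨lt_of_lt_of_le ha'Ioc.1 hz.1, hz.2⟩)).pow 2
      · intro y hy
        exact pow_ne_zero 2 (hu'_pos y ⟨lt_of_lt_of_le ha'Ioc.1 hy.1, hy.2⟩).ne'
    have h5 := hu''int.mul_continuousOn hcont2 isCompact_Icc
    apply h5.congr (Eventually.of_forall fun y => ?_)
    ring
  have hFY_int : IntegrableOn
      (fun y => |u' y| • ((fun s => f (w s) s * (1 + (W s) ^ 2) ^ ((3:ℝ)/2)) (u y)))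
      (Icc (w α') c) :=
    hintY.congr ((haeS _ measurableSet_Icc (subset_refl _)).symm)
  have hGoalA : IntegrableOn (fun s => f (w s) s * (1 + (W s) ^ 2) ^ ((3:ℝ)/2))
      (Icc α' (u c)) := by
    rw [← himgS, integrableOn_image_iff_integrableOn_abs_deriv_smul measurableSet_Icc
      (hderivS _ (subset_refl _)) hInjS]
    exact hFY_int
  refine ⟨hGoalA, ?_⟩
  intro t ht
  have htIcc : t ∈ Icc (u a) (u c) := ⟨le_trans hα'.1.le ht.1, ht.2⟩
  have hxIcc : w t ∈ Icc a c := hwmem t htIcc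
  have hwt : u (w t) = t := hw_inv₂ t htIcc
  have ha'x : w α' ≤ w t := hwmono.monotoneOn hα'Icc htIcc ht.1
  have hS2sub : Icc (w α') (w t) ⊆ Icc (w α') c := Icc_subset_Icc le_rfl hxIcc.2
  have himgS2 : u '' Icc (w α') (w t) = Icc α' t := by
    rw [himg _ ha'Icc _ hxIcc ha'x, hua', hwt]
  have harea : ∫ s in Icc α' t, f (w s) s * (1 + (W s) ^ 2) ^ ((3:ℝ)/2)
      = ∫ y in Icc (w α') (w t),
        |u' y| • ((fun s => f (w s) s * (1 + (W s) ^ 2) ^ ((3:ℝ)/2)) (u y)) := by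
    rw [← himgS2]
    exact integral_image_eq_integral_abs_deriv_smul measurableSet_Icc
      (hderivS _ hS2sub) (hInjS.mono hS2sub) _
  have hcongr : ∫ y in Icc (w α') (w t),
        |u' y| • ((fun s => f (w s) s * (1 + (W s) ^ 2) ^ ((3:ℝ)/2)) (u y))
      = ∫ y in Icc (w α') (w t), -u'' y / (u' y) ^ 2 :=
    integral_congr_ae (haeS _ measurableSet_Icc hS2sub)
  have hW_t : W t = (u' (w t))⁻¹ := hWgt t (lt_of_lt_of_le hα'.1 ht.1)
  have hW_α' : W α' = (u' (w α'))⁻¹ := hWgt α' hα'.1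
  have hinv_t := hinv (w t) ⟨ha'x, hxIcc.2⟩
  rw [hW_t, hW_α', hinv_t]
  congr 1
  rw [intervalIntegral.integral_of_le ha'x, intervalIntegral.integral_of_le ht.1,
    ← integral_Icc_eq_integral_Ioc, ← integral_Icc_eq_integral_Ioc, ← hcongr, ← harea]
end
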